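/- arXiv:1012.2754 — 2 statements merged into one kernel-verified Lean document; each statement's English description precedes it below -/
import Mathlib

section
/- The completed Eisenstein series E*_s(z), defined for Re(s) > 1, extends meromorphically in s to all of ℂ with simple poles exactly at s = 0 and s = 1, with residues −1/2 and 1/2 respectively (for each fixed z ∈ ℍ). -/
open Real Set

/-- The completed Eisenstein series
`E*_s(z) = (1/2) π^{-s} Γ(s) Σ_{(m,n)≠0} (y/|mz+n|²)^s`, for `Re(s) > 1`. -/
noncomputable def Estar (s : ℂ) (x y : ℝ) : ℂ :=
  (1 / 2) * (Real.pi : ℂ) ^ (-s) * Complex.Gamma s *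
    ∑' p : ℤ × ℤ, if p = 0 then 0 else
      ((y : ℂ) / ((((p.1 : ℝ) * x + (p.2 : ℝ)) ^ 2 + (p.1 : ℝ) ^ 2 * y ^ 2 : ℝ) : ℂ)) ^ s


open Real Set Complex Filter Asymptotics

namespace EstarAux

noncomputable def Qf (x y : ℝ) (p : ℤ × ℤ) : ℝ :=
  (((p.1 : ℝ) * x + (p.2 : ℝ)) ^ 2 + (p.1 : ℝ) ^ 2 * y ^ 2) / y

lemma Qf_nonneg (x : ℝ) {y : ℝ} (hy : 0 < y) (p : ℤ × ℤ) : 0 ≤ Qf x y p := by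
  unfold Qf; positivity

noncomputable def cQ (x y : ℝ) : ℝ := min (1/2) (y^2/(1+2*x^2)) / y

lemma cQ_pos {x y : ℝ} (hy : 0 < y) : 0 < cQ x y := by
  unfold cQ
  have h1 : 0 < y^2/(1+2*x^2) := by positivity
  have : 0 < min (1/2) (y^2/(1+2*x^2)) := lt_min (by norm_num) h1
  positivity

lemma Qf_lower (x : ℝ) {y : ℝ} (hy : 0 < y) (p : ℤ × ℤ) :
    cQ x y * ((p.1 : ℝ)^2 + (p.2 : ℝ)^2) ≤ Qf x y p := by
  set δ := min (1/2) (y^2/(1+2*x^2)) with hδ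
  have hδpos : 0 < δ := lt_min (by norm_num) (by positivity)
  have hδ1 : δ ≤ 1/2 := min_le_left _ _
  have hδ2 : δ * (1+2*x^2) ≤ y^2 := by
    rw [hδ]
    have h2 : 0 < 1 + 2*x^2 := by positivity
    calc min (1/2) (y^2/(1+2*x^2)) * (1+2*x^2) ≤ (y^2/(1+2*x^2)) * (1+2*x^2) :=
          mul_le_mul_of_nonneg_right (min_le_right _ _) h2.le
      _ = y^2 := div_mul_cancel₀ _ h2.ne'
  set A := ((p.1 : ℝ) * x + (p.2 : ℝ)) ^ 2 with hA
  set B := ((p.1 : ℝ))^2 with hB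
  have hC : ((p.2 : ℝ))^2 ≤ 2*A + 2*x^2*B := by nlinarith [sq_nonneg ((p.1:ℝ)*x + (p.2:ℝ) + (p.1:ℝ)*x)]
  have hA0 : 0 ≤ A := sq_nonneg _
  have hB0 : 0 ≤ B := sq_nonneg _
  have key : δ * (B + (p.2:ℝ)^2) ≤ A + B * y^2 := by nlinarith [mul_le_mul_of_nonneg_left hC hδpos.le]
  unfold Qf cQ
  rw [div_mul_eq_mul_div, div_le_div_iff_of_pos_right hy]
  calc δ * ((p.1:ℝ)^2 + (p.2:ℝ)^2) = δ * (B + (p.2:ℝ)^2) := by rw [hB]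
    _ ≤ A + B * y^2 := key
    _ = A + B * y^2 := rfl
  
lemma one_le_sq_sum {p : ℤ × ℤ} (hp : p ≠ 0) : (1:ℝ) ≤ (p.1 : ℝ)^2 + (p.2 : ℝ)^2 := by
  have : p.1 ≠ 0 ∨ p.2 ≠ 0 := by
    by_contra hc
    push_neg at hc
    exact hp (Prod.ext hc.1 hc.2)
  rcases this with h | h
  · have : (1:ℝ) ≤ (p.1 : ℝ)^2 := by
      have h1 : (1:ℤ) ≤ p.1^2 := by
        have : (1:ℤ) ≤ |p.1| := Int.one_le_abs h
        nlinarith [_root_.sq_abs p.1]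
      exact_mod_cast h1
    nlinarith [sq_nonneg (p.2:ℝ)]
  · have : (1:ℝ) ≤ (p.2 : ℝ)^2 := by
      have h1 : (1:ℤ) ≤ p.2^2 := by
        have : (1:ℤ) ≤ |p.2| := Int.one_le_abs h
        nlinarith [_root_.sq_abs p.2]
      exact_mod_cast h1
    nlinarith [sq_nonneg (p.1:ℝ)]

lemma Qf_pos (x : ℝ) {y : ℝ} (hy : 0 < y) {p : ℤ × ℤ} (hp : p ≠ 0) : 0 < Qf x y p :=
  lt_of_lt_of_le (by nlinarith [cQ_pos (x := x) hy, one_le_sq_sum hp])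
    (Qf_lower x hy p)

lemma cQ_le_Qf (x : ℝ) {y : ℝ} (hy : 0 < y) {p : ℤ × ℤ} (hp : p ≠ 0) : cQ x y ≤ Qf x y p :=
  le_trans (by nlinarith [cQ_pos (x := x) hy, one_le_sq_sum hp]) (Qf_lower x hy p)

end EstarAux
section SummStuff
open EstarAux
variable {x y : ℝ}

lemma term_eq (q t : ℝ) : Complex.exp (-(π:ℂ) * (q:ℂ) * (t:ℂ)) = ((Real.exp (-π * q * t) : ℝ) : ℂ) := by
  rw [Complex.ofReal_exp]; congr 1; push_cast; ring

lemma summable_exp_int {c : ℝ} (hc : 0 < c) : Summable fun n : ℤ => rexp (-c * (n:ℝ)^2) := by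
  have h := summable_pow_mul_jacobiTheta₂_term_bound 0 (T := c/π) (by positivity) 0
  refine h.congr fun n => ?_
  rw [pow_zero, one_mul]
  field_simp
  ring

lemma summable_prod_exp {c d : ℝ} (hc : 0 < c) (hd : 0 < d) :
    Summable fun p : ℤ × ℤ => rexp (-(c * (p.1:ℝ)^2 + d * (p.2:ℝ)^2)) := by
  have h := (summable_exp_int hc).mul_of_nonneg (summable_exp_int hd)
    (fun n => (Real.exp_pos _).le) (fun n => (Real.exp_pos _).le)
  refine h.congr fun p => ?_
  rw [← Real.exp_add]
  congr 1; ring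

lemma summable_Qf_real (hy : 0 < y) {t : ℝ} (ht : 0 < t) :
    Summable fun p : ℤ × ℤ => rexp (-π * Qf x y p * t) := by
  have hc := cQ_pos (x := x) hy
  refine (summable_prod_exp (c := π * cQ x y * t) (d := π * cQ x y * t)
      (by positivity) (by positivity)).of_nonneg_of_le
    (fun p => (Real.exp_pos _).le) (fun p => ?_)
  apply Real.exp_le_exp.2
  have h := Qf_lower x hy p
  nlinarith [mul_le_mul_of_nonneg_left h (by positivity : (0:ℝ) ≤ π * t)]

lemma summable_cexp_Qf (hy : 0 < y) {t : ℝ} (ht : 0 < t) :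
    Summable fun p : ℤ × ℤ => Complex.exp (-(π:ℂ) * (Qf x y p : ℝ) * (t:ℝ)) := by
  apply Summable.of_norm
  refine (summable_Qf_real (x := x) hy ht).congr fun p => ?_
  rw [term_eq, Complex.norm_real, Real.norm_eq_abs, abs_of_pos (Real.exp_pos _)]

end SummStuff
section Theta
open EstarAux Complex
variable {x y t : ℝ}

lemma theta_master (hy : 0 < y) (ht : 0 < t) :
    ∑' p : ℤ × ℤ, Complex.exp (-(π:ℂ) * (Qf x y p : ℝ) * (t:ℝ))
    = (1/(t:ℂ)) * ∑' p : ℤ × ℤ, Complex.exp (-(π:ℂ) * (Qf x y p : ℝ) * ((1/t : ℝ):ℂ)) := by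
  set a : ℝ := t / y with ha_def
  have ha : 0 < a := div_pos ht hy
  have hta : 0 < t * y := mul_pos ht hy
  have haC : (0:ℝ) < ((a:ℂ)).re := by simpa using ha
  have hyC : (y:ℂ) ≠ 0 := Complex.ofReal_ne_zero.mpr hy.ne'
  have htC : (t:ℂ) ≠ 0 := Complex.ofReal_ne_zero.mpr ht.ne'
  have haC' : (a:ℂ) ≠ 0 := Complex.ofReal_ne_zero.mpr ha.ne'
  have htyC : (0:ℝ) < (((t*y:ℝ):ℂ)).re := by simpa using hta
  -- inner n-sum computation, for each m
  have hB : ∀ m : ℤ, (∑' n : ℤ, Complex.exp (-(π:ℂ) * (Qf x y (m, n) : ℝ) * (t:ℝ)))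
      = 1/(a:ℂ)^(1/2:ℂ) * ∑' n : ℤ,
          Complex.exp (-(π:ℂ)*(t:ℝ)*(y:ℝ)*(m:ℂ)^2 + (-(π:ℂ)/(a:ℂ)*(n:ℂ)^2 + 2*(π:ℂ)*Complex.I*(m:ℂ)*(x:ℝ)*(n:ℂ))) := by
    intro m
    set b : ℂ := -(a:ℂ)*(m:ℂ)*(x:ℝ) with hb_def
    have e1 : ∀ n : ℤ, -(π:ℂ) * (Qf x y (m, n) : ℝ) * (t:ℝ)
        = (-(π:ℂ)*(a:ℂ)*(n:ℂ)^2 + 2*(π:ℂ)*b*(n:ℂ))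
          + (-(π:ℂ)*(a:ℂ)*(m:ℂ)^2*(x:ℝ)^2 - (π:ℂ)*(t:ℝ)*(y:ℝ)*(m:ℂ)^2) := by
      intro n
      unfold Qf
      rw [hb_def, ha_def]
      push_cast
      field_simp [hyC]
      ring
    calc (∑' n : ℤ, Complex.exp (-(π:ℂ) * (Qf x y (m, n) : ℝ) * (t:ℝ)))
        = (∑' n : ℤ, Complex.exp (-(π:ℂ)*(a:ℂ)*(n:ℂ)^2 + 2*(π:ℂ)*b*(n:ℂ)))
            * Complex.exp (-(π:ℂ)*(a:ℂ)*(m:ℂ)^2*(x:ℝ)^2 - (π:ℂ)*(t:ℝ)*(y:ℝ)*(m:ℂ)^2) := by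
          rw [← tsum_mul_right]
          exact tsum_congr fun n => by rw [e1 n, Complex.exp_add]
      _ = (1/(a:ℂ)^(1/2:ℂ) * ∑' n : ℤ, Complex.exp (-(π:ℂ)/(a:ℂ) * ((n:ℂ) + Complex.I*b)^2))
            * Complex.exp (-(π:ℂ)*(a:ℂ)*(m:ℂ)^2*(x:ℝ)^2 - (π:ℂ)*(t:ℝ)*(y:ℝ)*(m:ℂ)^2) := by
          rw [Complex.tsum_exp_neg_quadratic haC b]
      _ = 1/(a:ℂ)^(1/2:ℂ) * ∑' n : ℤ,
          Complex.exp (-(π:ℂ)*(t:ℝ)*(y:ℝ)*(m:ℂ)^2 + (-(π:ℂ)/(a:ℂ)*(n:ℂ)^2 + 2*(π:ℂ)*Complex.I*(m:ℂ)*(x:ℝ)*(n:ℂ))) := by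
          rw [mul_assoc, ← tsum_mul_right]
          congr 1
          refine tsum_congr fun n => ?_
          rw [← Complex.exp_add]
          congr 1
          rw [hb_def]
          have h2 : ((n:ℂ) + Complex.I*(-(a:ℂ)*(m:ℂ)*(x:ℝ)))^2
              = (n:ℂ)^2 + 2*Complex.I*(-(a:ℂ)*(m:ℂ)*(x:ℝ))*(n:ℂ)
                + Complex.I^2*((a:ℂ)*(m:ℂ)*(x:ℝ))^2 := by ring
          rw [h2, Complex.I_sq]
          field_simp [haC']
          ring
    -- end hB
  -- summability of the double series after the first Poisson summation
  have SG : Summable (Function.uncurry (fun m n : ℤ =>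
      Complex.exp (-(π:ℂ)*(t:ℝ)*(y:ℝ)*(m:ℂ)^2 + (-(π:ℂ)/(a:ℂ)*(n:ℂ)^2 + 2*(π:ℂ)*Complex.I*(m:ℂ)*(x:ℝ)*(n:ℂ))))) := by
    apply Summable.of_norm
    have hpa : 0 < π / a := by positivity
    have hpty : 0 < π * (t*y) := by positivity
    refine (summable_prod_exp (c := π*(t*y)) (d := π/a) hpty hpa).congr fun p => ?_
    have hexp : (-(π:ℂ)*(t:ℝ)*(y:ℝ)*(p.1:ℂ)^2 + (-(π:ℂ)/(a:ℂ)*(p.2:ℂ)^2 + 2*(π:ℂ)*Complex.I*(p.1:ℂ)*(x:ℝ)*(p.2:ℂ)))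
        = ((-(π*(t*y))*(p.1:ℝ)^2 - (π/a)*(p.2:ℝ)^2 : ℝ) : ℂ) + ((2*π*(p.1:ℝ)*x*(p.2:ℝ) : ℝ):ℂ) * Complex.I := by
      push_cast
      ring
    rw [Function.uncurry]
    rw [hexp, Complex.norm_exp]
    simp only [Complex.add_re, Complex.ofReal_re, Complex.mul_re, Complex.I_re, Complex.I_im,
      Complex.ofReal_im, mul_zero, mul_one, zero_sub, zero_mul, sub_zero]
    congr 1
    ring
  -- the final summand is summable
  have ht' : 0 < 1/t := by positivity
  have hs1t := summable_cexp_Qf (x := x) hy ht'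
  let e : ℤ × ℤ ≃ ℤ × ℤ :=
    ⟨fun p => (p.1, -p.2), fun p => (p.1, -p.2), fun p => by simp, fun p => by simp⟩
  have hsum' : Summable (fun p : ℤ × ℤ =>
      Complex.exp (-(π:ℂ) * (Qf x y (p.1, -p.2) : ℝ) * ((1/t:ℝ):ℂ))) := by
    have := hs1t.comp_injective e.injective
    exact this.congr fun p => rfl
  calc ∑' p : ℤ × ℤ, Complex.exp (-(π:ℂ) * (Qf x y p : ℝ) * (t:ℝ))
      = ∑' m : ℤ, ∑' n : ℤ, Complex.exp (-(π:ℂ) * (Qf x y (m, n) : ℝ) * (t:ℝ)) :=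
        Summable.tsum_prod (summable_cexp_Qf hy ht)
    _ = 1/(a:ℂ)^(1/2:ℂ) * ∑' m : ℤ, ∑' n : ℤ,
          Complex.exp (-(π:ℂ)*(t:ℝ)*(y:ℝ)*(m:ℂ)^2 + (-(π:ℂ)/(a:ℂ)*(n:ℂ)^2 + 2*(π:ℂ)*Complex.I*(m:ℂ)*(x:ℝ)*(n:ℂ))) := by
        rw [← tsum_mul_left]
        exact tsum_congr fun m => hB m
    _ = 1/(a:ℂ)^(1/2:ℂ) * ∑' n : ℤ, ∑' m : ℤ,
          Complex.exp (-(π:ℂ)*(t:ℝ)*(y:ℝ)*(m:ℂ)^2 + (-(π:ℂ)/(a:ℂ)*(n:ℂ)^2 + 2*(π:ℂ)*Complex.I*(m:ℂ)*(x:ℝ)*(n:ℂ))) := by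
        rw [Summable.tsum_comm SG]
    _ = 1/(a:ℂ)^(1/2:ℂ) * ∑' n : ℤ, (1/(((t*y:ℝ)):ℂ)^(1/2:ℂ) *
          ∑' m : ℤ, Complex.exp (-(π:ℂ) * (Qf x y (n, -m) : ℝ) * ((1/t:ℝ):ℂ))) := by
        congr 1
        refine tsum_congr fun n => ?_
        calc (∑' m : ℤ, Complex.exp (-(π:ℂ)*(t:ℝ)*(y:ℝ)*(m:ℂ)^2 + (-(π:ℂ)/(a:ℂ)*(n:ℂ)^2 + 2*(π:ℂ)*Complex.I*(m:ℂ)*(x:ℝ)*(n:ℂ))))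
            = (∑' m : ℤ, Complex.exp (-(π:ℂ)*((t*y:ℝ):ℂ)*(m:ℂ)^2 + 2*(π:ℂ)*(Complex.I*(x:ℝ)*(n:ℂ))*(m:ℂ)))
                * Complex.exp (-(π:ℂ)/(a:ℂ)*(n:ℂ)^2) := by
              rw [← tsum_mul_right]
              refine tsum_congr fun m => ?_
              rw [← Complex.exp_add]
              congr 1
              push_cast
              ring
          _ = (1/(((t*y:ℝ)):ℂ)^(1/2:ℂ) * ∑' m : ℤ,
                Complex.exp (-(π:ℂ)/((t*y:ℝ):ℂ) * ((m:ℂ) + Complex.I*(Complex.I*(x:ℝ)*(n:ℂ)))^2))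
                * Complex.exp (-(π:ℂ)/(a:ℂ)*(n:ℂ)^2) := by
              rw [Complex.tsum_exp_neg_quadratic htyC]
          _ = 1/(((t*y:ℝ)):ℂ)^(1/2:ℂ) *
                ∑' m : ℤ, Complex.exp (-(π:ℂ) * (Qf x y (n, -m) : ℝ) * ((1/t:ℝ):ℂ)) := by
              rw [mul_assoc, ← tsum_mul_right]
              congr 1
              refine tsum_congr fun m => ?_
              rw [← Complex.exp_add]
              congr 1
              unfold Qf
              rw [ha_def]
              have h1 : ((m:ℂ) + Complex.I*(Complex.I*(x:ℝ)*(n:ℂ))) = ((m:ℂ) - (x:ℝ)*(n:ℂ)) := by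
                rw [show Complex.I*(Complex.I*(x:ℝ)*(n:ℂ)) = Complex.I*Complex.I*((x:ℝ)*(n:ℂ)) by ring,
                  Complex.I_mul_I]
                ring
              rw [h1]
              push_cast
              field_simp [hyC, htC]
              ring
    _ = 1/(a:ℂ)^(1/2:ℂ) * (1/(((t*y:ℝ)):ℂ)^(1/2:ℂ) *
          ∑' n : ℤ, ∑' m : ℤ, Complex.exp (-(π:ℂ) * (Qf x y (n, -m) : ℝ) * ((1/t:ℝ):ℂ))) := by
        rw [tsum_mul_left]
    _ = (1/(t:ℂ)) * ∑' n : ℤ, ∑' m : ℤ, Complex.exp (-(π:ℂ) * (Qf x y (n, -m) : ℝ) * ((1/t:ℝ):ℂ)) := by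
        rw [← mul_assoc]
        congr 1
        rw [div_mul_div_comm, one_mul]
        congr 1
        rw [show ((1:ℂ)/2) = ((1/2 : ℝ):ℂ) by norm_num]
        rw [← Complex.ofReal_cpow ha.le, ← Complex.ofReal_cpow hta.le, ← Complex.ofReal_mul]
        rw [← Real.mul_rpow ha.le hta.le]
        have h3 : a * (t*y) = t^2 := by rw [ha_def]; field_simp
        rw [h3]
        norm_cast
        rw [← Real.rpow_natCast t 2, ← Real.rpow_mul ht.le]
        norm_num
    _ = (1/(t:ℂ)) * ∑' p : ℤ × ℤ, Complex.exp (-(π:ℂ) * (Qf x y p : ℝ) * ((1/t:ℝ):ℂ)) := by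
        congr 1
        rw [← Summable.tsum_prod hsum']
        have h4 := e.tsum_eq (fun p : ℤ × ℤ => Complex.exp (-(π:ℂ) * (Qf x y p : ℝ) * ((1/t:ℝ):ℂ)))
        exact h4
  
end Theta
section Pair
open EstarAux MeasureTheory Filter Asymptotics
variable {x y : ℝ}

noncomputable def fTheta (x y : ℝ) : ℝ → ℂ :=
  fun t => ∑' p : ℤ × ℤ, Complex.exp (-(π:ℂ) * (Qf x y p : ℝ) * (t:ℝ))

lemma continuousOn_fTheta (hy : 0 < y) : ContinuousOn (fTheta x y) (Ioi 0) := by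
  intro t₀ ht₀
  rw [mem_Ioi] at ht₀
  have h2 : 0 < t₀ / 2 := by linarith
  have hcont : ContinuousOn (fTheta x y) (Ici (t₀/2)) := by
    refine (tendstoUniformlyOn_tsum (u := fun p : ℤ × ℤ => rexp (-π * Qf x y p * (t₀/2)))
      (summable_Qf_real hy h2) (fun p u hu => ?_)).continuousOn
      (Filter.Eventually.of_forall fun N => ?_).frequently
    · rw [term_eq, Complex.norm_real, Real.norm_eq_abs, abs_of_pos (Real.exp_pos _)]
      apply Real.exp_le_exp.2
      have hQ := Qf_nonneg x hy p
      rw [mem_Ici] at hu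
      nlinarith [mul_le_mul_of_nonneg_left hu (by positivity : (0:ℝ) ≤ π * Qf x y p)]
    · refine continuous_finset_sum _ (fun p _ => ?_) |>.continuousOn
      exact Complex.continuous_exp.comp (by fun_prop)
  exact ((hcont.continuousAt (Ici_mem_nhds (by linarith))).continuousWithinAt)

lemma Qf_zero : Qf x y 0 = 0 := by simp [Qf]

lemma fTheta_sub_one (hy : 0 < y) {t : ℝ} (ht : 0 < t) :
    fTheta x y t - 1
      = ∑' p : ℤ × ℤ, (if p = 0 then 0 else Complex.exp (-(π:ℂ) * (Qf x y p : ℝ) * (t:ℝ))) := by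
  have h := Summable.tsum_eq_add_tsum_ite (summable_cexp_Qf (x := x) hy ht) 0
  have h0 : Complex.exp (-(π:ℂ) * (Qf x y (0 : ℤ × ℤ) : ℝ) * (t:ℝ)) = 1 := by
    rw [Qf_zero]; simp
  rw [fTheta, h, h0]
  ring

lemma fTheta_decay (hy : 0 < y) :
    (fun t => fTheta x y t - 1) =O[atTop] fun t => rexp (-(π * cQ x y) * t) := by
  have hc : 0 < cQ x y := cQ_pos hy
  set S : ℝ := ∑' p : ℤ × ℤ, rexp (-π * Qf x y p * 1) with hS
  rw [isBigO_iff]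
  refine ⟨rexp (π * cQ x y) * S, ?_⟩
  filter_upwards [eventually_ge_atTop 1] with t ht1
  have ht : 0 < t := by linarith
  rw [fTheta_sub_one hy ht]
  have hnorms : ∀ p : ℤ × ℤ,
      ‖(if p = 0 then 0 else Complex.exp (-(π:ℂ) * (Qf x y p : ℝ) * (t:ℝ)))‖
        = (if p = 0 then 0 else rexp (-π * Qf x y p * t)) := by
    intro p
    split
    · simp
    · rw [term_eq, Complex.norm_real, Real.norm_eq_abs, abs_of_pos (Real.exp_pos _)]
  have hsn : Summable fun p : ℤ × ℤ =>
      ‖(if p = 0 then 0 else Complex.exp (-(π:ℂ) * (Qf x y p : ℝ) * (t:ℝ)))‖ := by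
    refine (summable_Qf_real (x := x) hy ht).of_nonneg_of_le (fun p => norm_nonneg _) (fun p => ?_)
    rw [hnorms]
    split
    · positivity
    · exact le_rfl
  calc ‖∑' p : ℤ × ℤ, (if p = 0 then 0 else Complex.exp (-(π:ℂ) * (Qf x y p : ℝ) * (t:ℝ)))‖
      ≤ ∑' p : ℤ × ℤ, ‖(if p = 0 then 0 else Complex.exp (-(π:ℂ) * (Qf x y p : ℝ) * (t:ℝ)))‖ :=
        norm_tsum_le_tsum_norm hsn
    _ ≤ ∑' p : ℤ × ℤ, (rexp (π * cQ x y) * rexp (-(π * cQ x y) * t)) * rexp (-π * Qf x y p * 1) := by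
        refine Summable.tsum_le_tsum (fun p => ?_) hsn (((summable_Qf_real (x := x) hy one_pos).mul_left _))
        rw [hnorms]
        split
        · positivity
        · rename_i hp
          rw [← Real.exp_add, ← Real.exp_add]
          apply Real.exp_le_exp.2
          have hle := cQ_le_Qf x hy hp
          nlinarith [mul_le_mul_of_nonneg_right hle (by linarith : (0:ℝ) ≤ t - 1), Real.pi_pos]
    _ = (rexp (π * cQ x y) * S) * rexp (-(π * cQ x y) * t) := by
        rw [tsum_mul_left, hS]
        ring
    _ ≤ (rexp (π * cQ x y) * S) * ‖rexp (-(π * cQ x y) * t)‖ := by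
        rw [Real.norm_eq_abs, abs_of_pos (Real.exp_pos _)]

/-- The weak FE-pair for the Eisenstein theta function. -/
noncomputable def EstarFEPair (x y : ℝ) (hy : 0 < y) : WeakFEPair ℂ where
  f := fTheta x y
  g := fTheta x y
  k := 1
  ε := 1
  f₀ := 1
  g₀ := 1
  hf_int := (continuousOn_fTheta hy).locallyIntegrableOn measurableSet_Ioi
  hg_int := (continuousOn_fTheta hy).locallyIntegrableOn measurableSet_Ioi
  hk := one_pos
  hε := one_ne_zero
  h_feq := fun t ht => by
    rw [mem_Ioi] at ht
    have htC : (t:ℂ) ≠ 0 := Complex.ofReal_ne_zero.mpr ht.ne'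
    have hm := theta_master (x := x) hy ht
    simp only [smul_eq_mul, one_mul, Real.rpow_one]
    show fTheta x y (1/t) = (t:ℂ) * fTheta x y t
    rw [fTheta, fTheta, hm, ← mul_assoc, mul_one_div, div_self htC, one_mul]
  hf_top := fun r => by
    have hc0 := cQ_pos (y := y) (x := x) hy
    have hc : 0 < π * cQ x y := by positivity
    exact (fTheta_decay hy).trans (isLittleO_exp_neg_mul_rpow_atTop hc r).isBigO
  hg_top := fun r => by
    have hc0 := cQ_pos (y := y) (x := x) hy
    have hc : 0 < π * cQ x y := by positivity
    exact (fTheta_decay hy).trans (isLittleO_exp_neg_mul_rpow_atTop hc r).isBigO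

end Pair
section Mellin
open EstarAux MeasureTheory Filter Asymptotics
variable {x y : ℝ}

lemma h_sum_aux (hy : 0 < y) {σ : ℝ} (hσ : 1 < σ) :
    Summable fun p : ℤ × ℤ => ‖(if p = 0 then (0:ℂ) else 1)‖ / Qf x y p ^ σ := by
  have hσ0 : 0 < σ := by linarith
  have hc : 0 < cQ x y := cQ_pos hy
  have hS := EisensteinSeries.summable_one_div_norm_rpow (k := 2*σ) (by linarith)
  have hS2 : Summable fun p : ℤ × ℤ => ‖(finTwoArrowEquiv ℤ).symm p‖ ^ (-(2*σ)) :=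
    ((finTwoArrowEquiv ℤ).symm.summable_iff).2 hS
  refine (hS2.mul_left ((cQ x y) ^ (-σ))).of_nonneg_of_le
    (fun p => div_nonneg (norm_nonneg _) (Real.rpow_nonneg (Qf_nonneg x hy p) _)) (fun p => ?_)
  by_cases hp : p = 0
  · subst hp
    have hz : ‖(finTwoArrowEquiv ℤ).symm (0 : ℤ × ℤ)‖ = 0 := by simp
    rw [hz, Real.zero_rpow (neg_ne_zero.mpr (by positivity)), mul_zero]
    simp
  · rw [if_neg hp, norm_one]
    have hv : ‖(finTwoArrowEquiv ℤ).symm p‖ = ((max p.1.natAbs p.2.natAbs : ℕ) : ℝ) := by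
      rw [EisensteinSeries.norm_eq_max_natAbs]
      simp [finTwoArrowEquiv]
    set N : ℕ := max p.1.natAbs p.2.natAbs with hN
    have hN1 : 1 ≤ N := by
      have h' : ¬(p.1 = 0 ∧ p.2 = 0) := by simpa [Prod.ext_iff] using hp
      rw [hN]
      omega
    have hNpos : (0:ℝ) < (N:ℝ) := by exact_mod_cast hN1
    have hsq : ((N:ℝ))^2 ≤ (p.1:ℝ)^2 + (p.2:ℝ)^2 := by
      rcases max_choice p.1.natAbs p.2.natAbs with h | h <;>
        rw [hN, h, Nat.cast_natAbs] <;> push_cast <;>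
        nlinarith [_root_.sq_abs ((p.1:ℝ)), _root_.sq_abs ((p.2:ℝ)), sq_nonneg (p.1:ℝ), sq_nonneg (p.2:ℝ)]
    have key : cQ x y * (N:ℝ)^2 ≤ Qf x y p :=
      le_trans (mul_le_mul_of_nonneg_left hsq hc.le) (Qf_lower x hy p)
    have h5 : (cQ x y * (N:ℝ)^2) ^ σ ≤ Qf x y p ^ σ :=
      Real.rpow_le_rpow (by positivity) key hσ0.le
    have h6 : (cQ x y * (N:ℝ)^2)^σ = cQ x y ^ σ * (N:ℝ)^(2*σ) := by
      rw [Real.mul_rpow hc.le (by positivity), ← Real.rpow_natCast (N:ℝ) 2,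
        ← Real.rpow_mul hNpos.le]
      norm_num
    rw [hv, Real.rpow_neg hc.le, Real.rpow_neg hNpos.le, one_div, ← mul_inv]
    rw [h6] at h5
    exact inv_anti₀ (by positivity) h5

lemma mellin_eq_dirichlet (hy : 0 < y) {s : ℂ} (hs : 1 < s.re) :
    mellin (fun t => fTheta x y t - 1) s
      = (π:ℂ)^(-s) * Complex.Gamma s
          * ∑' p : ℤ × ℤ, (if p = 0 then 0 else 1/(((Qf x y p : ℝ)):ℂ)^s) := by
  have h0 : 0 < s.re := by linarith
  have hq : ∀ p : ℤ × ℤ, (if p = 0 then (0:ℂ) else 1) = 0 ∨ 0 < Qf x y p := by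
    intro p
    by_cases hp : p = 0
    · left; simp [hp]
    · right; exact Qf_pos x hy hp
  have hF : ∀ t ∈ Ioi (0:ℝ), HasSum
      (fun p : ℤ × ℤ => (if p = 0 then (0:ℂ) else 1) * rexp (-π * Qf x y p * t))
      (fTheta x y t - 1) := by
    intro t ht
    rw [mem_Ioi] at ht
    have heq : ∀ p : ℤ × ℤ, (if p = 0 then (0:ℂ) else 1) * rexp (-π * Qf x y p * t)
        = (if p = 0 then 0 else Complex.exp (-(π:ℂ) * (Qf x y p : ℝ) * (t:ℝ))) := by
      intro p
      split
      · rw [zero_mul]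
      · rw [one_mul, term_eq]
    have hsummable : Summable (fun p : ℤ × ℤ =>
        (if p = 0 then (0:ℂ) else 1) * rexp (-π * Qf x y p * t)) := by
      apply Summable.of_norm
      refine (summable_Qf_real (x := x) hy ht).of_nonneg_of_le (fun p => norm_nonneg _)
        (fun p => ?_)
      rw [heq]
      split
      · simp; positivity
      · rw [term_eq, Complex.norm_real, Real.norm_eq_abs, abs_of_pos (Real.exp_pos _)]
    rw [hsummable.hasSum_iff, fTheta_sub_one hy ht]
    exact tsum_congr heq
  have H := hasSum_mellin_pi_mul hq h0 hF (h_sum_aux hy hs)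
  rw [← H.tsum_eq, ← tsum_mul_left]
  refine tsum_congr fun p => ?_
  by_cases hp : p = 0
  · simp [hp]
  · rw [if_neg hp, if_neg hp]
    ring

end Mellin


open EstarAux MeasureTheory Filter Asymptotics

/-- For each fixed `z ∈ ℍ`, `s ↦ E*_s(z)` extends meromorphically to `ℂ` with simple
poles exactly at `s = 0` and `s = 1`, of residues `−1/2` and `1/2` respectively. -/
theorem Estar_meromorphic_continuation (x y : ℝ) (hy : 0 < y) :
    ∃ F G : ℂ → ℂ,
      (∀ s : ℂ, 1 < s.re → F s = Estar s x y) ∧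
      AnalyticOnNhd ℂ G Set.univ ∧
      (∀ s : ℂ, s ≠ 0 → s ≠ 1 → F s = G s + (-(1 / 2)) / s + (1 / 2) / (s - 1)) := by
  set P := EstarFEPair x y hy with hP
  refine ⟨fun s => (1/2 : ℂ) * P.Λ s, fun s => (1/2 : ℂ) * P.Λ₀ s, ?_, ?_, ?_⟩
  · intro s hs
    show (1/2 : ℂ) * P.Λ s = Estar s x y
    have hks : P.k < s.re := by
      show (1:ℝ) < s.re
      exact hs
    have hΛ : mellin (fun t => P.f t - P.f₀) s = P.Λ s := (P.hasMellin hks).2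
    have hf : P.f = fTheta x y := rfl
    have hf₀ : P.f₀ = 1 := rfl
    rw [← hΛ, hf, hf₀, mellin_eq_dirichlet hy hs, Estar]
    have htsum : ∑' p : ℤ × ℤ, (if p = 0 then 0 else 1/(((Qf x y p : ℝ)):ℂ)^s)
        = ∑' p : ℤ × ℤ, (if p = 0 then 0 else
            ((y : ℂ) / ((((p.1 : ℝ) * x + (p.2 : ℝ)) ^ 2 + (p.1 : ℝ) ^ 2 * y ^ 2 : ℝ) : ℂ)) ^ s) := by
      refine tsum_congr fun p => ?_
      by_cases hp : p = 0
      · simp [hp]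
      · rw [if_neg hp, if_neg hp]
        have hQ : 0 < Qf x y p := Qf_pos x hy hp
        have hDeq : ((p.1 : ℝ) * x + (p.2 : ℝ)) ^ 2 + (p.1 : ℝ) ^ 2 * y ^ 2 = y * Qf x y p := by
          unfold Qf
          field_simp
        have hD : (0:ℝ) < ((p.1 : ℝ) * x + (p.2 : ℝ)) ^ 2 + (p.1 : ℝ) ^ 2 * y ^ 2 := by
          rw [hDeq]
          exact mul_pos hy hQ
        have hrw : (y : ℂ) / ((((p.1 : ℝ) * x + (p.2 : ℝ)) ^ 2 + (p.1 : ℝ) ^ 2 * y ^ 2 : ℝ) : ℂ)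
            = (((Qf x y p)⁻¹ : ℝ) : ℂ) := by
          unfold Qf
          push_cast
          rw [inv_div]
        rw [hrw, Complex.ofReal_inv, inv_cpow _ _ ?_, one_div]
        rw [Complex.arg_ofReal_of_nonneg hQ.le]
        exact Ne.symm Real.pi_ne_zero
    rw [htsum]
    ring
  · have hD : Differentiable ℂ (fun s => (1/2 : ℂ) * P.Λ₀ s) :=
      P.differentiable_Λ₀.const_mul _
    exact hD.differentiableOn.analyticOnNhd isOpen_univ
  · intro s hs0 hs1
    show (1/2 : ℂ) * P.Λ s = (1/2 : ℂ) * P.Λ₀ s + -(1 / 2) / s + 1 / 2 / (s - 1)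
    have hΛdef : P.Λ s = P.Λ₀ s - (1/s) • P.f₀ - ((P.ε)/((P.k:ℝ) - s)) • P.g₀ := rfl
    have hf₀ : P.f₀ = 1 := rfl
    have hg₀ : P.g₀ = 1 := rfl
    have hε : P.ε = 1 := rfl
    have hk : P.k = 1 := rfl
    rw [hΛdef, hf₀, hg₀, hε, hk, smul_eq_mul, smul_eq_mul, mul_one, mul_one]
    push_cast
    have h1 : s - 1 ≠ 0 := sub_ne_zero.mpr hs1
    have h4 : (1:ℂ) - s ≠ 0 := by rw [sub_ne_zero]; exact fun h => hs1 h.symm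
    field_simp
    ring
end

section
/- Fix z ∈ ℍ. As t → 0⁺, Θ_t(z) = 1/t − 1 + O(e^{-c/t}) for some c > 0 depending on z; and as t → ∞, Θ_t(z) = O(e^{-c't}) for some c' > 0. -/
open Real Set Filter Asymptotics Complex


lemma gauss_summable {a : ℝ} (ha : 0 < a) : Summable (fun n : ℤ => rexp (-π * a * n ^ 2)) := by
  have := summable_pow_mul_jacobiTheta₂_term_bound 0 ha 0
  simpa [mul_assoc] using this

lemma Qbound (x y : ℝ) (hy : 0 < y) (m n : ℝ) :
    y / (x ^ 2 + y ^ 2 + 1) * (m ^ 2 + n ^ 2) ≤ ((m * x + n) ^ 2 + m ^ 2 * y ^ 2) / y := by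
  rw [div_mul_eq_mul_div, div_le_div_iff₀ (by positivity) hy]
  nlinarith [sq_nonneg ((m * x + n) * x + m * y ^ 2), sq_nonneg (m * x + n)]

-- summability of the 2D Gaussian product
lemma prod_summable {a b : ℝ} (ha : 0 < a) (hb : 0 < b) :
    Summable (fun p : ℤ × ℤ => rexp (-π * a * p.1 ^ 2) * rexp (-π * b * p.2 ^ 2)) :=
  (gauss_summable ha).mul_of_nonneg (gauss_summable hb)
    (fun _ => (Real.exp_pos _).le) (fun _ => (Real.exp_pos _).le)

section Main
variable {x y : ℝ} (hy : 0 < y)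

noncomputable def gg (x y t : ℝ) (p : ℤ × ℤ) : ℝ :=
  rexp (-π * t * (((p.1 : ℝ) * x + (p.2 : ℝ)) ^ 2 + (p.1 : ℝ) ^ 2 * y ^ 2) / y)

include hy in
lemma gg_le {t : ℝ} (ht : 0 < t) (p : ℤ × ℤ) :
    gg x y t p ≤ rexp (-π * (t * (y / (x ^ 2 + y ^ 2 + 1))) * p.1 ^ 2) *
      rexp (-π * (t * (y / (x ^ 2 + y ^ 2 + 1))) * p.2 ^ 2) := by
  rw [gg, ← Real.exp_add]
  apply Real.exp_le_exp.2
  have h := Qbound x y hy (p.1 : ℝ) (p.2 : ℝ)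
  have hπt : 0 ≤ π * t := by positivity
  have h2 := mul_le_mul_of_nonneg_left h hπt
  have e1 : -π * (t * (y / (x ^ 2 + y ^ 2 + 1))) * (p.1:ℝ) ^ 2 +
      -π * (t * (y / (x ^ 2 + y ^ 2 + 1))) * (p.2:ℝ) ^ 2 =
      -(π * t * (y / (x ^ 2 + y ^ 2 + 1) * ((p.1:ℝ) ^ 2 + (p.2:ℝ) ^ 2))) := by ring
  have e2 : -π * t * (((p.1:ℝ) * x + (p.2:ℝ)) ^ 2 + (p.1:ℝ) ^ 2 * y ^ 2) / y =
      -(π * t * ((((p.1:ℝ) * x + (p.2:ℝ)) ^ 2 + (p.1:ℝ) ^ 2 * y ^ 2) / y)) := by ring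
  rw [e1, e2]
  exact neg_le_neg h2

include hy in
lemma gg_summable {t : ℝ} (ht : 0 < t) : Summable (gg x y t) := by
  refine Summable.of_nonneg_of_le (fun p => (Real.exp_pos _).le) (gg_le hy ht) ?_
  exact prod_summable (by positivity) (by positivity)


include hy in
lemma one_le_Q {p : ℤ × ℤ} (hp : p ≠ 0) :
    y / (x ^ 2 + y ^ 2 + 1) ≤ (((p.1:ℝ) * x + (p.2:ℝ)) ^ 2 + (p.1:ℝ) ^ 2 * y ^ 2) / y := by
  have h1 : (1 : ℝ) ≤ (p.1:ℝ) ^ 2 + (p.2:ℝ) ^ 2 := by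
    have : (1 : ℤ) ≤ p.1 ^ 2 + p.2 ^ 2 := by
      rcases ne_or_eq p.1 0 with h1 | h1
      · nlinarith [sq_nonneg p.2, Int.one_le_abs h1, _root_.sq_abs p.1, abs_nonneg p.1]
      · have h2 : p.2 ≠ 0 := fun h => hp (Prod.ext h1 h)
        nlinarith [sq_nonneg p.1, Int.one_le_abs h2, _root_.sq_abs p.2, abs_nonneg p.2]
    exact_mod_cast this
  calc y / (x ^ 2 + y ^ 2 + 1) ≤ y / (x ^ 2 + y ^ 2 + 1) * ((p.1:ℝ) ^ 2 + (p.2:ℝ) ^ 2) := by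
        nlinarith [div_pos hy (by positivity : (0:ℝ) < x ^ 2 + y ^ 2 + 1)]
    _ ≤ _ := Qbound x y hy _ _

include hy in
lemma theta_le {t : ℝ} (ht : 1 ≤ t) :
    (∑' p : ℤ × ℤ, if p = 0 then 0 else gg x y t p) ≤
      rexp (-(π * (y / (x ^ 2 + y ^ 2 + 1))) * (t - 1)) *
        ∑' p : ℤ × ℤ, if p = 0 then 0 else gg x y 1 p := by
  rw [← tsum_mul_left]
  have h0t : (0:ℝ) < t := lt_of_lt_of_le one_pos ht
  refine Summable.tsum_le_tsum (fun p => ?_) ?_ ?_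
  · rcases eq_or_ne p 0 with rfl | hp
    · simp
    · simp only [if_neg hp]
      rw [gg, gg, ← Real.exp_add]
      apply Real.exp_le_exp.2
      have hQ := one_le_Q hy (x := x) hp
      have h2 := mul_le_mul_of_nonneg_left hQ (mul_nonneg pi_pos.le (by linarith) : (0:ℝ) ≤ π * (t - 1))
      have e2 : -π * t * (((p.1:ℝ) * x + (p.2:ℝ)) ^ 2 + (p.1:ℝ) ^ 2 * y ^ 2) / y =
          -(π * (t-1) * ((((p.1:ℝ) * x + (p.2:ℝ)) ^ 2 + (p.1:ℝ) ^ 2 * y ^ 2) / y))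
          + -π * 1 * (((p.1:ℝ) * x + (p.2:ℝ)) ^ 2 + (p.1:ℝ) ^ 2 * y ^ 2) / y := by ring
      rw [e2]
      have e1 : -(π * (y / (x ^ 2 + y ^ 2 + 1))) * (t - 1) =
          -(π * (t-1) * (y / (x ^ 2 + y ^ 2 + 1))) := by ring
      rw [e1]
      exact add_le_add_left (neg_le_neg h2) _
  · refine Summable.of_nonneg_of_le (fun p => ?_) (fun p => ?_) (gg_summable hy h0t (x := x))
    · rcases eq_or_ne p 0 with rfl | hp
      · simp
      · rw [if_neg hp]; exact (Real.exp_pos _).le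
    · rcases eq_or_ne p 0 with rfl | hp
      · exact (Real.exp_pos _).le
      · rw [if_neg hp]
  · refine Summable.mul_left _ ?_
    refine Summable.of_nonneg_of_le (fun p => ?_) (fun p => ?_) (gg_summable hy one_pos (x := x))
    · rcases eq_or_ne p 0 with rfl | hp
      · simp
      · rw [if_neg hp]; exact (Real.exp_pos _).le
    · rcases eq_or_ne p 0 with rfl | hp
      · exact (Real.exp_pos _).le
      · rw [if_neg hp]

end Main


lemma sqrt_cpow {a : ℝ} (ha : 0 < a) : ((a : ℂ) ^ (1/2 : ℂ)) = (Real.sqrt a : ℂ) := by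
  rw [Real.sqrt_eq_rpow, Complex.ofReal_cpow ha.le]
  norm_num

/-- Shifted 1D Poisson summation for the Gaussian. -/
lemma poisson_shift {a : ℝ} (ha : 0 < a) (v : ℝ) :
    ∑' n : ℤ, ((rexp (-π * a * ((n:ℝ) + v) ^ 2) : ℝ) : ℂ) =
      (Real.sqrt a : ℂ)⁻¹ *
        ∑' n : ℤ, cexp (-(π:ℂ) * n ^ 2 / a + 2 * π * Complex.I * v * n) := by
  have ha' : (0:ℝ) < ((a:ℂ)).re := by simpa using ha
  have key := Complex.tsum_exp_neg_quadratic ha' (-(a:ℂ) * v)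
  have hL : ∀ n : ℤ, ((rexp (-π * a * ((n:ℝ) + v) ^ 2) : ℝ) : ℂ) =
      cexp (-(π:ℂ) * a * v ^ 2) * cexp (-(π:ℂ) * a * n ^ 2 + 2 * π * (-(a:ℂ) * v) * n) := by
    intro n
    rw [← Complex.exp_add, Complex.ofReal_exp]
    push_cast
    ring_nf
  have hR : ∀ n : ℤ, cexp (-(π:ℂ) / a * ((n:ℂ) + Complex.I * (-(a:ℂ) * v)) ^ 2) =
      cexp ((π:ℂ) * a * v ^ 2) * cexp (-(π:ℂ) * n ^ 2 / a + 2 * π * Complex.I * v * n) := by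
    intro n
    rw [← Complex.exp_add]
    congr 1
    have h2 : Complex.I ^ 2 = -1 := Complex.I_sq
    have haC : (a:ℂ) ≠ 0 := by exact_mod_cast ha.ne'
    field_simp
    ring_nf
    rw [h2]
    ring
  calc ∑' n : ℤ, ((rexp (-π * a * ((n:ℝ) + v) ^ 2) : ℝ) : ℂ)
      = cexp (-(π:ℂ) * a * v ^ 2) *
          ∑' n : ℤ, cexp (-(π:ℂ) * a * n ^ 2 + 2 * π * (-(a:ℂ) * v) * n) := by
        rw [← tsum_mul_left]; exact tsum_congr hL
    _ = cexp (-(π:ℂ) * a * v ^ 2) * (1 / (a:ℂ) ^ (1/2 : ℂ) *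
          ∑' n : ℤ, cexp (-(π:ℂ) / a * ((n:ℂ) + Complex.I * (-(a:ℂ) * v)) ^ 2)) := by rw [key]
    _ = cexp (-(π:ℂ) * a * v ^ 2) * (1 / (a:ℂ) ^ (1/2 : ℂ) * (cexp ((π:ℂ) * a * v ^ 2) *
          ∑' n : ℤ, cexp (-(π:ℂ) * n ^ 2 / a + 2 * π * Complex.I * v * n))) := by
        congr 1; congr 1
        rw [tsum_congr hR, tsum_mul_left]
    _ = _ := by
        rw [sqrt_cpow ha]
        rw [show ∀ A B C D : ℂ, A * (1 / B * (C * D)) = (A * C) * (1/B) * D by intros; ring,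
          ← Complex.exp_add]
        norm_num



section split
variable {x y t : ℝ} (hy : 0 < y) (ht : 0 < t)

include hy in
lemma gg_split (m n : ℤ) : gg x y t (m, n) =
    rexp (-π * (t * y) * (m:ℝ) ^ 2) * rexp (-π * (t / y) * ((n:ℝ) + (m:ℝ) * x) ^ 2) := by
  rw [gg, ← Real.exp_add]
  congr 1
  field_simp
  ring

include hy ht in
lemma claimA (m n : ℤ) :
    ((rexp (-π * (t * y) * (m:ℝ) ^ 2) : ℝ) : ℂ) *
      cexp (-(π:ℂ) * (n:ℂ) ^ 2 / ((t / y : ℝ) : ℂ) + 2 * π * Complex.I * ((m:ℝ) * x : ℝ) * n) =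
    ((rexp (-π * (t * y) * (m:ℝ) ^ 2) : ℝ) : ℂ) *
      (((rexp (-π * (y / t) * (n:ℝ) ^ 2) : ℝ) : ℂ) * cexp ((2 * π * x * (m:ℝ) * (n:ℝ) : ℝ) * Complex.I)) := by
  congr 1
  rw [Complex.ofReal_exp, ← Complex.exp_add]
  congr 1
  have hyC : ((y:ℂ)) ≠ 0 := by exact_mod_cast hy.ne'
  have htC : ((t:ℂ)) ≠ 0 := by exact_mod_cast ht.ne'
  push_cast
  field_simp

include hy ht in
lemma claimB (m n : ℤ) :
    ((rexp (-π * (t * y) * (m:ℝ) ^ 2) : ℝ) : ℂ) * cexp ((2 * π * x * (m:ℝ) * (n:ℝ) : ℝ) * Complex.I) =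
      cexp (-(π:ℂ) * ((t * y : ℝ) : ℂ) * (m:ℂ) ^ 2 + 2 * π * (Complex.I * x * n) * m) := by
  rw [Complex.ofReal_exp, ← Complex.exp_add]
  congr 1
  push_cast
  ring

include hy ht in
lemma claimC (m n : ℤ) :
    cexp (-(π:ℂ) / ((t * y : ℝ) : ℂ) * ((m:ℂ) + Complex.I * (Complex.I * x * n)) ^ 2) =
      ((rexp (-π / (t * y) * ((m:ℝ) - x * (n:ℝ)) ^ 2) : ℝ) : ℂ) := by
  rw [Complex.ofReal_exp]
  congr 1
  have h2 : Complex.I * (Complex.I * x * n) = -((x:ℂ) * n) := by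
    rw [show Complex.I * (Complex.I * (x:ℂ) * n) = Complex.I ^ 2 * (x * n) by ring, Complex.I_sq]
    ring
  rw [h2]
  push_cast
  ring

include hy ht in
lemma claimD (m n : ℤ) :
    rexp (-π * (y / t) * (n:ℝ) ^ 2) * rexp (-π / (t * y) * ((m:ℝ) - x * (n:ℝ)) ^ 2) =
      gg x y t⁻¹ (-n, m) := by
  rw [gg, ← Real.exp_add]
  congr 1
  push_cast
  field_simp
  ring

end split

lemma F_inv (x y : ℝ) (hy : 0 < y) {t : ℝ} (ht : 0 < t) :
    ∑' p : ℤ × ℤ, gg x y t p = t⁻¹ * ∑' p : ℤ × ℤ, gg x y t⁻¹ p := by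
  have hty : 0 < t * y := mul_pos ht hy
  have hdiv : 0 < t / y := div_pos ht hy
  have hyt : 0 < y / t := div_pos hy ht
  -- the middle double-sum function
  set k : ℤ → ℤ → ℂ := fun m n => ((rexp (-π * (t * y) * (m:ℝ) ^ 2) : ℝ) : ℂ) *
      (((rexp (-π * (y / t) * (n:ℝ) ^ 2) : ℝ) : ℂ) *
        cexp ((2 * π * x * (m:ℝ) * (n:ℝ) : ℝ) * Complex.I)) with hk
  have hkS : Summable (Function.uncurry k) := by
    apply Summable.of_norm
    have : (fun q : ℤ × ℤ => ‖Function.uncurry k q‖) =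
        fun q : ℤ × ℤ => rexp (-π * (t * y) * q.1 ^ 2) * rexp (-π * (y / t) * q.2 ^ 2) := by
      funext q
      simp only [Function.uncurry, hk, norm_mul, Complex.norm_real, Real.norm_eq_abs,
        Real.abs_exp, Complex.norm_exp_ofReal_mul_I, mul_one]
    rw [this]
    exact prod_summable hty hyt
  rw [← Complex.ofReal_inj]
  calc ((∑' p : ℤ × ℤ, gg x y t p : ℝ) : ℂ)
      = ∑' (m : ℤ), ∑' (n : ℤ), ((gg x y t (m, n) : ℝ) : ℂ) := by
        rw [Complex.ofReal_tsum]
        exact Summable.tsum_prod (Complex.summable_ofReal.2 (gg_summable hy ht))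
    _ = ∑' (m : ℤ), ((Real.sqrt (t / y) : ℂ))⁻¹ *
          ∑' (n : ℤ), k m n := by
        refine tsum_congr fun m => ?_
        calc ∑' (n : ℤ), ((gg x y t (m, n) : ℝ) : ℂ)
            = ((rexp (-π * (t * y) * (m:ℝ) ^ 2) : ℝ) : ℂ) *
                ∑' (n : ℤ), ((rexp (-π * (t / y) * ((n:ℝ) + (m:ℝ) * x) ^ 2) : ℝ) : ℂ) := by
              rw [← tsum_mul_left]
              exact tsum_congr fun n => by rw [gg_split hy, Complex.ofReal_mul]
          _ = ((rexp (-π * (t * y) * (m:ℝ) ^ 2) : ℝ) : ℂ) * ((Real.sqrt (t / y) : ℂ)⁻¹ *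
                ∑' (n : ℤ), cexp (-(π:ℂ) * (n:ℂ) ^ 2 / ((t / y : ℝ) : ℂ) +
                  2 * π * Complex.I * ((m:ℝ) * x : ℝ) * n)) := by
              rw [poisson_shift hdiv ((m:ℝ) * x)]
          _ = ((Real.sqrt (t / y) : ℂ))⁻¹ * ∑' (n : ℤ), k m n := by
              rw [mul_left_comm]
              congr 1
              rw [← tsum_mul_left]
              exact tsum_congr fun n => claimA hy ht m n
    _ = ((Real.sqrt (t / y) : ℂ))⁻¹ * ∑' (n : ℤ), ∑' (m : ℤ), k m n := by
        rw [tsum_mul_left, Summable.tsum_comm hkS]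
    _ = ((Real.sqrt (t / y) : ℂ))⁻¹ * ∑' (n : ℤ), ((rexp (-π * (y / t) * (n:ℝ) ^ 2) : ℝ) : ℂ) *
          ((Real.sqrt (t * y) : ℂ)⁻¹ *
            ∑' (m : ℤ), ((rexp (-π / (t * y) * ((m:ℝ) - x * (n:ℝ)) ^ 2) : ℝ) : ℂ)) := by
        congr 1
        refine tsum_congr fun n => ?_
        calc ∑' (m : ℤ), k m n
            = ((rexp (-π * (y / t) * (n:ℝ) ^ 2) : ℝ) : ℂ) *
                ∑' (m : ℤ), cexp (-(π:ℂ) * ((t * y : ℝ) : ℂ) * (m:ℂ) ^ 2 +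
                  2 * π * (Complex.I * x * n) * m) := by
              rw [← tsum_mul_left]
              refine tsum_congr fun m => ?_
              rw [hk, ← claimB hy ht m n]
              ring
          _ = _ := by
              rw [Complex.tsum_exp_neg_quadratic (by simpa using hty) (Complex.I * x * n),
                sqrt_cpow hty, one_div, tsum_congr (fun m => claimC hy ht m n)]
    _ = ((Real.sqrt (t / y) : ℂ))⁻¹ * ((Real.sqrt (t * y) : ℂ))⁻¹ *
          ((∑' (n : ℤ), ∑' (m : ℤ), gg x y t⁻¹ (-n, m) : ℝ) : ℂ) := by
        rw [mul_assoc]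
        congr 1
        rw [Complex.ofReal_tsum, ← tsum_mul_left]
        refine tsum_congr fun n => ?_
        rw [mul_left_comm, Complex.ofReal_tsum, ← tsum_mul_left]
        congr 1
        refine tsum_congr fun m => ?_
        rw [← Complex.ofReal_mul, claimD hy ht m n]
    _ = ((t⁻¹ * ∑' p : ℤ × ℤ, gg x y t⁻¹ p : ℝ) : ℂ) := by
        have hsq : Real.sqrt (t / y) * Real.sqrt (t * y) = t := by
          rw [← Real.sqrt_mul hdiv.le, show t / y * (t * y) = t ^ 2 by field_simp,
            Real.sqrt_sq ht.le]
        have hGs : Summable (fun q : ℤ × ℤ => gg x y t⁻¹ (-q.1, q.2)) :=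
          ((Equiv.prodCongr (Equiv.neg ℤ) (Equiv.refl ℤ)).summable_iff
            (f := gg x y t⁻¹)).2 (gg_summable hy (inv_pos.2 ht))
        have hsum2 : (∑' (n : ℤ), ∑' (m : ℤ), gg x y t⁻¹ (-n, m)) =
            ∑' p : ℤ × ℤ, gg x y t⁻¹ p := by
          rw [← Summable.tsum_prod hGs]
          exact ((Equiv.prodCongr (Equiv.neg ℤ) (Equiv.refl ℤ)).tsum_eq (gg x y t⁻¹))
        rw [hsum2, ← mul_inv, ← Complex.ofReal_mul, hsq, Complex.ofReal_mul, Complex.ofReal_inv]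


/-- The theta series `Θ_t(z) = Σ_{(m,n)∈ℤ²\{0}} exp(-πt|mz+n|²/y)`. -/
noncomputable def Theta (t x y : ℝ) : ℝ :=
  ∑' p : ℤ × ℤ, if p = 0 then 0 else
    Real.exp (-Real.pi * t * (((p.1 : ℝ) * x + (p.2 : ℝ)) ^ 2 + (p.1 : ℝ) ^ 2 * y ^ 2) / y)

/-- For fixed `z ∈ ℍ`: as `t → 0⁺`, `Θ_t(z) = 1/t − 1 + O(e^{-c/t})` for some `c > 0`,
and as `t → ∞`, `Θ_t(z) = O(e^{-c't})` for some `c' > 0`. -/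
theorem Theta_asymptotics (x y : ℝ) (hy : 0 < y) :
    (∃ c : ℝ, 0 < c ∧
      (fun t : ℝ => Theta t x y - (1 / t - 1))
        =O[nhdsWithin 0 (Ioi 0)] fun t : ℝ => Real.exp (-c / t)) ∧
    (∃ c' : ℝ, 0 < c' ∧
      (fun t : ℝ => Theta t x y) =O[atTop] fun t : ℝ => Real.exp (-c' * t)) := by
  have hTh : ∀ t, Theta t x y = ∑' p : ℤ × ℤ, if p = 0 then 0 else gg x y t p := fun t => rfl
  set c' : ℝ := π * (y / (x ^ 2 + y ^ 2 + 1)) with hc'def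
  have hc' : 0 < c' := by positivity
  have hnonneg : ∀ t, 0 ≤ Theta t x y := by
    intro t
    rw [hTh]
    refine tsum_nonneg fun p => ?_
    rcases eq_or_ne p 0 with rfl | hp
    · simp
    · rw [if_neg hp]; exact (Real.exp_pos _).le
  have hbound : ∀ t : ℝ, 1 ≤ t → Theta t x y ≤ rexp (-c' * (t - 1)) * Theta 1 x y := by
    intro t ht
    rw [hTh, hTh]
    exact theta_le hy ht
  have hA : 0 ≤ Theta 1 x y := hnonneg 1
  have hid : ∀ t : ℝ, 0 < t → Theta t x y - (1 / t - 1) = t⁻¹ * Theta t⁻¹ x y := by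
    intro t ht
    have h0 : ∀ s : ℝ, gg x y s 0 = 1 := fun s => by simp [gg]
    have h1 : ∑' p : ℤ × ℤ, gg x y t p = 1 + Theta t x y := by
      rw [hTh, Summable.tsum_eq_add_tsum_ite (gg_summable hy ht) 0, h0]
    have h2 : ∑' p : ℤ × ℤ, gg x y t⁻¹ p = 1 + Theta t⁻¹ x y := by
      rw [hTh, Summable.tsum_eq_add_tsum_ite (gg_summable hy (inv_pos.2 ht)) 0, h0]
    have h3 := F_inv x y hy ht
    rw [h1, h2] at h3
    rw [one_div]
    nlinarith [h3]
  constructor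
  · refine ⟨c' / 2, by positivity, ?_⟩
    rw [isBigO_iff]
    refine ⟨2 / c' * (rexp c' * Theta 1 x y), ?_⟩
    filter_upwards [Ioc_mem_nhdsGT_of_mem (by norm_num : (0:ℝ) ∈ Ico (0:ℝ) 1)] with t htt
    obtain ⟨ht0, ht1⟩ := htt
    have hti : 1 ≤ t⁻¹ := by
      have h := mul_inv_cancel₀ ht0.ne'
      nlinarith [inv_pos.2 ht0]
    rw [hid t ht0, Real.norm_eq_abs, Real.norm_eq_abs, _root_.abs_of_nonneg (Real.exp_pos _).le,
      _root_.abs_of_nonneg (mul_nonneg (inv_pos.2 ht0).le (hnonneg _))]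
    have hb := hbound t⁻¹ hti
    have hinv : t⁻¹ ≤ 2 / c' * rexp (c' / 2 * t⁻¹) := by
      have h := Real.add_one_le_exp (c' / 2 * t⁻¹)
      have h2 : c' / 2 * t⁻¹ ≤ rexp (c' / 2 * t⁻¹) := by linarith
      calc t⁻¹ = 2 / c' * (c' / 2 * t⁻¹) := by field_simp
        _ ≤ 2 / c' * rexp (c' / 2 * t⁻¹) :=
            mul_le_mul_of_nonneg_left h2 (by positivity)
    calc t⁻¹ * Theta t⁻¹ x y
        ≤ t⁻¹ * (rexp (-c' * (t⁻¹ - 1)) * Theta 1 x y) :=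
          mul_le_mul_of_nonneg_left hb (inv_pos.2 ht0).le
      _ ≤ (2 / c' * rexp (c' / 2 * t⁻¹)) * (rexp (-c' * (t⁻¹ - 1)) * Theta 1 x y) :=
          mul_le_mul_of_nonneg_right hinv (mul_nonneg (Real.exp_pos _).le hA)
      _ = 2 / c' * (rexp c' * Theta 1 x y) * rexp (-(c' / 2) / t) := by
          rw [show -(c' / 2) / t = -(c' / 2) * t⁻¹ by rw [div_eq_mul_inv],
            show (2 / c' * rexp (c' / 2 * t⁻¹)) * (rexp (-c' * (t⁻¹ - 1)) * Theta 1 x y) =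
              2 / c' * Theta 1 x y * (rexp (c' / 2 * t⁻¹) * rexp (-c' * (t⁻¹ - 1))) by ring,
            ← Real.exp_add, show c' / 2 * t⁻¹ + -c' * (t⁻¹ - 1) = c' + -(c' / 2) * t⁻¹ by ring,
            Real.exp_add]
          ring
  · refine ⟨c', hc', ?_⟩
    rw [isBigO_iff]
    refine ⟨rexp c' * Theta 1 x y, ?_⟩
    filter_upwards [eventually_ge_atTop (1:ℝ)] with t ht
    rw [Real.norm_eq_abs, Real.norm_eq_abs, _root_.abs_of_nonneg (hnonneg t),
      _root_.abs_of_nonneg (Real.exp_pos _).le]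
    calc Theta t x y ≤ rexp (-c' * (t - 1)) * Theta 1 x y := hbound t ht
      _ = rexp c' * Theta 1 x y * rexp (-c' * t) := by
          rw [show -c' * (t - 1) = c' + -c' * t by ring, Real.exp_add]; ring
end
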